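/- Let P_A, P_B, Q_A, Q_B be symmetric positive definite n×n matrices. Define for ω ∈ [0,1]: A(ω) = (P_A + ω Q_A)^{-1}, B(ω) = (P_B + ω Q_B)^{-1}, and H_SCI(ω) = ω A(ω) + (1−ω) B(1−ω). Then the second derivative of H_SCI with respect to ω is negative definite for all ω ∈ [0,1]; equivalently, −A(ω)[Q_A A(ω) P_A + P_A A(ω) Q_A]A(ω) − B(1−ω)[Q_B B(1−ω) P_B + P_B B(1−ω) Q_B]B(1−ω) ≺ 0. -/

import Mathlib

open Matrix
lemma psd_smul {n : ℕ} {Q : Matrix (Fin n) (Fin n) ℝ} (hQ : Q.PosSemidef) {c : ℝ} (hc : 0 ≤ c) :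
    (c • Q).PosSemidef := by
  refine posSemidef_iff_dotProduct_mulVec.mpr ⟨?_, fun x => ?_⟩
  · unfold Matrix.IsHermitian
    rw [conjTranspose_smul, hQ.1]
    simp
  · rw [Matrix.smul_mulVec, dotProduct_smul]
    exact mul_nonneg hc (hQ.dotProduct_mulVec_nonneg x)

lemma conj_posDef {n : ℕ} {M B : Matrix (Fin n) (Fin n) ℝ} (hM : M.PosDef) (hB : IsUnit B.det) :
    (Bᵀ * M * B).PosDef := by
  rw [posDef_iff_dotProduct_mulVec]
  constructor
  · have h := (hM.posSemidef.conjTranspose_mul_mul_same B).1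
    simpa using h
  · intro x hx
    have hBx : B *ᵥ x ≠ 0 := by
      intro h
      apply hx
      have h2 := congrArg (fun v => B⁻¹ *ᵥ v) h
      simpa [Matrix.mulVec_mulVec, Matrix.nonsing_inv_mul B hB] using h2
    have h3 := hM.dotProduct_mulVec_pos hBx
    have : Bᵀ = Bᴴ := by simp
    rw [this]
    simpa [← Matrix.mulVec_mulVec, Matrix.dotProduct_mulVec, Matrix.vecMul_transpose] using h3

lemma term_posDef {n : ℕ} {P Q : Matrix (Fin n) (Fin n) ℝ} (hP : P.PosDef) (hQ : Q.PosDef)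
    {ω : ℝ} (h0 : 0 ≤ ω) :
    ((P + ω•Q)⁻¹ * (Q * (P + ω•Q)⁻¹ * P + P * (P + ω•Q)⁻¹ * Q) * (P + ω•Q)⁻¹).PosDef := by
  set M := P + ω • Q with hMdef
  have hMpd : M.PosDef := hP.add_posSemidef (psd_smul hQ.posSemidef h0)
  set A := M⁻¹ with hAdef
  have hApd : A.PosDef := hMpd.inv
  have hMdet : IsUnit M.det := isUnit_iff_ne_zero.mpr hMpd.det_pos.ne'
  have hQdet : IsUnit Q.det := isUnit_iff_ne_zero.mpr hQ.det_pos.ne'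
  have hAM : A * M = 1 := nonsing_inv_mul M hMdet
  have hMA : M * A = 1 := mul_nonsing_inv M hMdet
  have hQQ : Q * Q⁻¹ = 1 := mul_nonsing_inv Q hQdet
  have hQQ' : Q⁻¹ * Q = 1 := nonsing_inv_mul Q hQdet
  have hPt : Pᵀ = P := by rw [← conjTranspose_eq_transpose_of_trivial]; exact hP.1
  have hAt : Aᵀ = A := by rw [← conjTranspose_eq_transpose_of_trivial]; exact hApd.1
  have hQt : Qᵀ = Q := by rw [← conjTranspose_eq_transpose_of_trivial]; exact hQ.1
  have hN : (P * Q⁻¹ * P + ω • P).PosDef := by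
    have h1 : (Pᵀ * Q⁻¹ * P).PosDef :=
      conj_posDef hQ.inv (isUnit_iff_ne_zero.mpr hP.det_pos.ne')
    rw [hPt] at h1
    exact h1.add_posSemidef (psd_smul hP.posSemidef h0)
  have hN2 := hN.add hN
  have hAdet : IsUnit A.det := isUnit_iff_ne_zero.mpr hApd.det_pos.ne'
  have hDdet : IsUnit (A * Q * A).det := by
    rw [det_mul, det_mul]; exact (hAdet.mul hQdet).mul hAdet
  have hD := conj_posDef hN2 hDdet
  have hAM1 : ∀ X : Matrix (Fin n) (Fin n) ℝ, A * (M * X) = X := fun X => by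
    rw [← Matrix.mul_assoc, hAM, Matrix.one_mul]
  have hMA1 : ∀ X : Matrix (Fin n) (Fin n) ℝ, M * (A * X) = X := fun X => by
    rw [← Matrix.mul_assoc, hMA, Matrix.one_mul]
  have hQ1 : ∀ X : Matrix (Fin n) (Fin n) ℝ, Q * (Q⁻¹ * X) = X := fun X => by
    rw [← Matrix.mul_assoc, hQQ, Matrix.one_mul]
  have hQ2 : ∀ X : Matrix (Fin n) (Fin n) ℝ, Q⁻¹ * (Q * X) = X := fun X => by
    rw [← Matrix.mul_assoc, hQQ', Matrix.one_mul]
  have hP' : P = M - ω • Q := by rw [hMdef]; abel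
  have key : A * (Q * A * P + P * A * Q) * A
      = (A*Q*A)ᵀ * ((P * Q⁻¹ * P + ω • P) + (P * Q⁻¹ * P + ω • P)) * (A*Q*A) := by
    rw [hP']
    simp only [transpose_mul, hAt, hQt]
    simp only [sub_mul, mul_sub, add_mul, mul_add, smul_mul_assoc, mul_smul_comm,
      Matrix.mul_assoc, hAM1, hMA1, hQ1, hQ2, hAM, hMA, hQQ, hQQ', Matrix.mul_one, Matrix.one_mul, smul_smul]
    module
  rw [key]
  exact hD

theorem sci_stmt5 {n : ℕ} (PA PB QA QB : Matrix (Fin n) (Fin n) ℝ)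
    (hPA : PA.PosDef) (hPB : PB.PosDef) (hQA : QA.PosDef) (hQB : QB.PosDef)
    (ω : ℝ) (hω : ω ∈ Set.Icc (0 : ℝ) 1) :
    let A := fun (t : ℝ) => (PA + t • QA)⁻¹
    let B := fun (t : ℝ) => (PB + t • QB)⁻¹
    (-(-(A ω * (QA * A ω * PA + PA * A ω * QA) * A ω)
      - (B (1 - ω) * (QB * B (1 - ω) * PB + PB * B (1 - ω) * QB) * B (1 - ω)))).PosDef := by
  obtain ⟨h0, h1⟩ := hω
  intro A B
  have hX := term_posDef hPA hQA h0
  have hY := term_posDef hPB hQB (by linarith : (0:ℝ) ≤ 1 - ω)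
  have e : ∀ X Y : Matrix (Fin n) (Fin n) ℝ, -(-X - Y) = X + Y := fun X Y => by abel
  rw [e]
  exact hX.add hY
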